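/- Let r = 2m+1 ≥ 3 be odd and ℓ ∈ ℝ^r a generic length vector with nonnegative weakly increasing components. Then μ(ℓ) = m if and only if ℓ is equivalent to (0,0,1,...,1). -/

import Mathlib

open Finset

/-- `J` is `ℓ`-long if the sum of `ℓ` over `J` exceeds the sum over its complement. -/
def IsLong {r : ℕ} (ℓ : Fin r → ℝ) (J : Finset (Fin r)) : Prop :=
  ∑ j ∈ Jᶜ, ℓ j < ∑ j ∈ J, ℓ j

/-- `ℓ` is generic if no subset sum equals the complementary sum. -/
def IsGeneric {r : ℕ} (ℓ : Fin r → ℝ) : Prop :=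
  ∀ J : Finset (Fin r), ∑ j ∈ J, ℓ j ≠ ∑ j ∈ Jᶜ, ℓ j

open scoped Classical in
/-- `σ_ℓ(J)`: the number of `j ∈ J` such that `J \ {j}` is `ℓ`-short. -/
noncomputable def sigmaL {r : ℕ} (ℓ : Fin r → ℝ) (J : Finset (Fin r)) : ℕ :=
  (J.filter (fun j => ¬ IsLong ℓ (J.erase j))).card

/-- `μ(ℓ) = min { σ_ℓ(J) : J ℓ-long, σ_ℓ(J) > 0 }`. -/
noncomputable def muL {r : ℕ} (ℓ : Fin r → ℝ) : ℕ :=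
  sInf {n : ℕ | 0 < n ∧ ∃ J : Finset (Fin r), IsLong ℓ J ∧ sigmaL ℓ J = n}

open scoped Classical

namespace MuOdd

variable {r : ℕ}

lemma sum_compl (ℓ : Fin r → ℝ) (J : Finset (Fin r)) :
    ∑ j ∈ Jᶜ, ℓ j = ∑ j, ℓ j - ∑ j ∈ J, ℓ j := by
  have h := Finset.sum_add_sum_compl J ℓ
  linarith

lemma long_iff (ℓ : Fin r → ℝ) (J : Finset (Fin r)) :
    IsLong ℓ J ↔ (∑ j, ℓ j) < 2 * ∑ j ∈ J, ℓ j := by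
  unfold IsLong
  rw [sum_compl]
  constructor <;> intro h <;> linarith

lemma two_sum_ne {ℓ : Fin r → ℝ} (hg : IsGeneric ℓ) (J : Finset (Fin r)) :
    2 * ∑ j ∈ J, ℓ j ≠ ∑ j, ℓ j := by
  intro h
  exact hg J (by rw [sum_compl]; linarith)

lemma short_iff {ℓ : Fin r → ℝ} (hg : IsGeneric ℓ) (J : Finset (Fin r)) :
    ¬ IsLong ℓ J ↔ 2 * ∑ j ∈ J, ℓ j < ∑ j, ℓ j := by
  rw [long_iff]
  have h := two_sum_ne hg J
  constructor
  · intro h1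
    rcases lt_or_eq_of_le (not_lt.1 h1) with h2 | h2
    · exact h2
    · exact absurd h2 h
  · intro h1
    linarith

lemma sigmaL_def (ℓ : Fin r → ℝ) (J : Finset (Fin r)) :
    sigmaL ℓ J = (J.filter (fun j => ¬ IsLong ℓ (J.erase j))).card := by
  unfold sigmaL
  congr 1

/-- cardinality of an initial segment of `Fin r` -/
lemma card_filter_lt (n : ℕ) (hn : n ≤ r) :
    ((univ : Finset (Fin r)).filter (fun i : Fin r => (i : ℕ) < n)).card = n := by
  apply Finset.card_eq_of_bijective (fun i hi => (⟨i, lt_of_lt_of_le hi hn⟩ : Fin r))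
  · intro a ha
    simp only [mem_filter, mem_univ, true_and] at ha
    exact ⟨(a : ℕ), ha, by simp⟩
  · intro i hi
    simp only [mem_filter, mem_univ, true_and]
    exact hi
  · intro i j hi hj hij
    simpa [Fin.ext_iff] using hij

/-- cardinality of an interval segment of `Fin r` -/
lemma card_filter_Ico (a b : ℕ) (hab : a ≤ b) (hb : b ≤ r) :
    ((univ : Finset (Fin r)).filter (fun i : Fin r => a ≤ (i : ℕ) ∧ (i : ℕ) < b)).card = b - a := by
  apply Finset.card_eq_of_bijective
    (fun i hi => (⟨a + i, by omega⟩ : Fin r))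
  · intro x hx
    simp only [mem_filter, mem_univ, true_and] at hx
    exact ⟨(x : ℕ) - a, by omega, by
      apply Fin.ext
      show a + ((x : ℕ) - a) = (x : ℕ)
      omega⟩
  · intro i hi
    simp only [mem_filter, mem_univ, true_and]
    refine ⟨?_, ?_⟩
    · show a ≤ a + i
      omega
    · show a + i < b
      omega
  · intro i j hi hj hij
    simp only [Fin.ext_iff] at hij
    omega

/-- lower bound for a strictly monotone ℕ-valued function on `Fin k` -/
lemma sm_le {k : ℕ} (u : Fin k → ℕ) (hu : ∀ a b : Fin k, a < b → u a < u b) (c : ℕ)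
    (hc : ∀ h0 : 0 < k, c ≤ u ⟨0, h0⟩) : ∀ t : Fin k, c + (t : ℕ) ≤ u t := by
  suffices h : ∀ n (hn : n < k), c + n ≤ u ⟨n, hn⟩ by
    intro t
    have := h t.val t.isLt
    simpa using this
  intro n
  induction n with
  | zero => intro hn; simpa using hc hn
  | succ p ih =>
    intro hn
    have h1 : p < k := by omega
    have h2 := hu ⟨p, h1⟩ ⟨p + 1, hn⟩ (by simp [Fin.lt_def])
    have h3 := ih h1
    omega

/-- sum over a finset via its monotone enumeration -/
lemma sum_emb (s : Finset (Fin r)) {k : ℕ} (h : s.card = k) (f : Fin r → ℝ) :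
    ∑ x ∈ s, f x = ∑ t : Fin k, f (s.orderEmbOfFin h t) := by
  have himg : (univ : Finset (Fin k)).image (s.orderEmbOfFin h) = s := by
    ext x
    constructor
    · intro hx
      rw [mem_image] at hx
      obtain ⟨t, _, rfl⟩ := hx
      exact orderEmbOfFin_mem s h t
    · intro hx
      have hx' : x ∈ Set.range (s.orderEmbOfFin h) := by
        rw [range_orderEmbOfFin]
        exact hx
      obtain ⟨t, ht⟩ := hx'
      rw [mem_image]
      exact ⟨t, mem_univ t, ht⟩
  calc ∑ x ∈ s, f x = ∑ x ∈ (univ : Finset (Fin k)).image (s.orderEmbOfFin h), f x := by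
        rw [himg]
    _ = ∑ t : Fin k, f (s.orderEmbOfFin h t) :=
        Finset.sum_image (fun a _ b _ hab => (s.orderEmbOfFin h).injective hab)


noncomputable def ones {r : ℕ} (J : Finset (Fin r)) : ℕ :=
  (J.filter (fun j : Fin r => 2 ≤ (j : ℕ))).card

lemma ones_univ {m : ℕ} (hm : 1 ≤ m) :
    ones (univ : Finset (Fin (2 * m + 1))) = 2 * m - 1 := by
  unfold ones
  have h1 := Finset.card_filter_add_card_filter_not
    (s := (univ : Finset (Fin (2 * m + 1)))) (p := fun j => 2 ≤ (j : ℕ))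
  have h2 : ((univ : Finset (Fin (2 * m + 1))).filter (fun j : Fin (2 * m + 1) => ¬ 2 ≤ (j : ℕ))) =
      (univ : Finset (Fin (2 * m + 1))).filter (fun i : Fin (2 * m + 1) => (i : ℕ) < 2) :=
    Finset.filter_congr (fun x _ => by simp [not_le])
  rw [h2, card_filter_lt 2 (by omega)] at h1
  have h3 : (univ : Finset (Fin (2 * m + 1))).card = 2 * m + 1 := by simp
  omega

lemma ones_add_compl {m : ℕ} (hm : 1 ≤ m) (J : Finset (Fin (2 * m + 1))) :
    ones J + ones Jᶜ = 2 * m - 1 := by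
  rw [← ones_univ hm]
  unfold ones
  rw [← Finset.card_union_of_disjoint (Finset.disjoint_filter_filter disjoint_compl_right),
    ← Finset.filter_union, Finset.union_compl]

lemma ones_erase_mem {r : ℕ} {J : Finset (Fin r)} {g : Fin r} (hg2 : 2 ≤ (g : ℕ))
    (hgJ : g ∈ J) : ones (J.erase g) + 1 = ones J := by
  unfold ones
  rw [Finset.filter_erase]
  rw [Finset.card_erase_of_mem (by rw [mem_filter]; exact ⟨hgJ, hg2⟩)]
  have h1 : 1 ≤ (J.filter (fun j : Fin r => 2 ≤ (j : ℕ))).card :=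
    card_pos.2 ⟨g, by rw [mem_filter]; exact ⟨hgJ, hg2⟩⟩
  omega

lemma ones_erase_not {r : ℕ} {J : Finset (Fin r)} {g : Fin r} (hg2 : ¬ 2 ≤ (g : ℕ)) :
    ones (J.erase g) = ones J := by
  unfold ones
  have hnot : g ∉ J.filter (fun j : Fin r => 2 ≤ (j : ℕ)) :=
    fun h => hg2 (Finset.mem_filter.1 h).2
  rw [Finset.filter_erase, Finset.erase_eq_of_notMem hnot]

lemma eps_long_iff {m : ℕ} (hm : 1 ≤ m) (J : Finset (Fin (2 * m + 1))) :
    IsLong (fun j : Fin (2 * m + 1) => if (j : ℕ) < 2 then (0 : ℝ) else 1) J ↔ m ≤ ones J := by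
  have hsum : ∀ K : Finset (Fin (2 * m + 1)),
      ∑ j ∈ K, (if (j : ℕ) < 2 then (0 : ℝ) else 1) = (ones K : ℝ) := by
    intro K
    rw [Finset.sum_ite, Finset.sum_const_zero, Finset.sum_const, zero_add, nsmul_eq_mul, mul_one]
    have h1 : (K.filter fun j : Fin (2 * m + 1) => ¬ (j : ℕ) < 2) =
        K.filter (fun j : Fin (2 * m + 1) => 2 ≤ (j : ℕ)) :=
      Finset.filter_congr (fun x _ => by simp [not_lt]; constructor <;> intro h <;> omega)
    rw [h1]
    rfl
  unfold IsLong
  rw [hsum, hsum]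
  have hc := ones_add_compl hm J
  constructor
  · intro h
    have h2 : ones Jᶜ < ones J := by exact_mod_cast h
    omega
  · intro h
    have h2 : ones Jᶜ < ones J := by omega
    exact_mod_cast h2

lemma backward {m : ℕ} (hm : 1 ≤ m) (ℓ : Fin (2 * m + 1) → ℝ)
    (H : ∀ J : Finset (Fin (2 * m + 1)), IsLong ℓ J ↔ m ≤ ones J) : muL ℓ = m := by
  have hAcard : ((univ : Finset (Fin (2 * m + 1))).filter
      (fun i : Fin (2 * m + 1) => 2 ≤ (i : ℕ) ∧ (i : ℕ) < m + 2)).card = m := by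
    rw [card_filter_Ico 2 (m + 2) (by omega) (by omega)]
    omega
  set A := (univ : Finset (Fin (2 * m + 1))).filter
      (fun i : Fin (2 * m + 1) => 2 ≤ (i : ℕ) ∧ (i : ℕ) < m + 2) with hA
  have hAones : ones A = m := by
    unfold ones
    have h1 : A.filter (fun j : Fin (2 * m + 1) => 2 ≤ (j : ℕ)) = A :=
      Finset.filter_eq_self.2 (fun x hx => by rw [hA, mem_filter] at hx; exact hx.2.1)
    rw [h1]
    exact hAcard
  have hAlong : IsLong ℓ A := (H A).2 (le_of_eq hAones.symm)
  have hAsig : sigmaL ℓ A = m := by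
    rw [sigmaL_def]
    have h1 : A.filter (fun g => ¬ IsLong ℓ (A.erase g)) = A := by
      apply Finset.filter_eq_self.2
      intro g hgA
      rw [H]
      have hg2 : 2 ≤ (g : ℕ) := by
        have := hgA
        rw [hA, mem_filter] at this
        exact this.2.1
      have h2 := ones_erase_mem hg2 hgA
      omega
    rw [h1]
    exact hAcard
  have hmem : m ∈ {n : ℕ | 0 < n ∧ ∃ J, IsLong ℓ J ∧ sigmaL ℓ J = n} :=
    ⟨by omega, A, hAlong, hAsig⟩
  have hub : ∀ n ∈ {n : ℕ | 0 < n ∧ ∃ J, IsLong ℓ J ∧ sigmaL ℓ J = n}, m ≤ n := by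
    rintro n ⟨hn, J, hJlong, rfl⟩
    have hJones : m ≤ ones J := (H J).1 hJlong
    have hne : (J.filter (fun j => ¬ IsLong ℓ (J.erase j))).Nonempty := by
      rw [← Finset.card_pos, ← sigmaL_def]
      omega
    obtain ⟨j0, hj0⟩ := hne
    rw [mem_filter] at hj0
    obtain ⟨hj0J, hj0s⟩ := hj0
    have hj0o : ones (J.erase j0) < m := by
      by_contra hcon
      push_neg at hcon
      exact hj0s ((H _).2 hcon)
    have hj02 : 2 ≤ (j0 : ℕ) := by
      by_contra hcon
      have h2 := ones_erase_not (J := J) (g := j0) hcon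
      omega
    have hJm : ones J = m := by
      have h2 := ones_erase_mem hj02 hj0J
      omega
    rw [sigmaL_def]
    have hsub : J.filter (fun j : Fin (2 * m + 1) => 2 ≤ (j : ℕ)) ⊆
        J.filter (fun j => ¬ IsLong ℓ (J.erase j)) := by
      intro g hgmem
      rw [mem_filter] at hgmem ⊢
      refine ⟨hgmem.1, ?_⟩
      rw [H]
      have h2 := ones_erase_mem hgmem.2 hgmem.1
      omega
    calc m = ones J := hJm.symm
      _ ≤ _ := Finset.card_le_card hsub
  unfold muL
  exact le_antisymm (Nat.sInf_le hmem) (le_csInf ⟨m, hmem⟩ hub)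

lemma forward {m : ℕ} (hm : 1 ≤ m) (ℓ : Fin (2 * m + 1) → ℝ) (hg : IsGeneric ℓ)
    (hpos : ∀ j, 0 ≤ ℓ j) (hmono : Monotone ℓ) (hmu : muL ℓ = m) :
    ∀ J : Finset (Fin (2 * m + 1)), IsLong ℓ J ↔ m ≤ ones J := by
  have hmuset : m ∈ {n : ℕ | 0 < n ∧
      ∃ J : Finset (Fin (2 * m + 1)), IsLong ℓ J ∧ sigmaL ℓ J = n} := by
    have hne : {n : ℕ | 0 < n ∧
        ∃ J : Finset (Fin (2 * m + 1)), IsLong ℓ J ∧ sigmaL ℓ J = n}.Nonempty := by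
      by_contra hempty
      rw [Set.not_nonempty_iff_eq_empty] at hempty
      unfold muL at hmu
      rw [hempty, Nat.sInf_empty] at hmu
      omega
    have h1 := Nat.sInf_mem hne
    unfold muL at hmu
    rwa [hmu] at h1
  -- Step 1: there is a long m-set
  have hexm : ∃ M : Finset (Fin (2 * m + 1)), M.card = m ∧ IsLong ℓ M := by
    by_contra hA
    push_neg at hA
    have hsmall : ∀ J : Finset (Fin (2 * m + 1)), J.card ≤ m → ¬ IsLong ℓ J := by
      intro J hJ
      obtain ⟨T, hJT, hTuniv, hTm⟩ := Finset.exists_subsuperset_card_eq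
        (Finset.subset_univ J) hJ (by rw [Finset.card_univ, Fintype.card_fin]; omega)
      have hTs : ¬ IsLong ℓ T := fun h => hA T hTm h
      rw [short_iff hg] at hTs ⊢
      have hle : ∑ j ∈ J, ℓ j ≤ ∑ j ∈ T, ℓ j :=
        Finset.sum_le_sum_of_subset_of_nonneg hJT (fun i _ _ => hpos i)
      linarith
    obtain ⟨hmpos, J, hJlong, hJsig⟩ := hmuset
    have hlow : m + 1 ≤ J.card := by
      by_contra hcon
      push_neg at hcon
      exact hsmall J (by omega) hJlong
    have hne : (J.filter (fun j => ¬ IsLong ℓ (J.erase j))).Nonempty := by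
      rw [← card_pos, ← sigmaL_def, hJsig]
      omega
    obtain ⟨j0, hj0⟩ := hne
    rw [mem_filter] at hj0
    have h1 : 2 * ∑ i ∈ J.erase j0, ℓ i < ∑ j, ℓ j := (short_iff hg _).1 hj0.2
    have h2 : IsLong ℓ (J.erase j0)ᶜ := by
      rw [long_iff, sum_compl]
      linarith
    have h3 : m + 1 ≤ (J.erase j0)ᶜ.card := by
      by_contra hcon
      push_neg at hcon
      exact hsmall _ (by omega) h2
    have h4 : (J.erase j0)ᶜ.card = (2 * m + 1) - (J.card - 1) := by
      rw [Finset.card_compl, Finset.card_erase_of_mem hj0.1, Fintype.card_fin]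
    have hJle : J.card ≤ 2 * m + 1 := by
      have h5 := Finset.card_le_univ J
      simpa using h5
    have hJcard : J.card = m + 1 := by omega
    have hfull : J.filter (fun j => ¬ IsLong ℓ (J.erase j)) = J := by
      apply Finset.filter_eq_self.2
      intro g hgJ
      exact hsmall _ (by rw [Finset.card_erase_of_mem hgJ]; omega)
    rw [sigmaL_def, hfull] at hJsig
    omega
  -- Step 2: minimal-sum long m-set W
  obtain ⟨M0, hM0c, hM0l⟩ := hexm
  obtain ⟨W, hWmem, hWmin'⟩ := Finset.exists_min_image
    (univ.filter (fun M : Finset (Fin (2 * m + 1)) => M.card = m ∧ IsLong ℓ M))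
    (fun M => ∑ i ∈ M, ℓ i)
    ⟨M0, by rw [mem_filter]; exact ⟨mem_univ _, hM0c, hM0l⟩⟩
  rw [mem_filter] at hWmem
  obtain ⟨-, hWc, hWl⟩ := hWmem
  have hWmin : ∀ V : Finset (Fin (2 * m + 1)), V.card = m → IsLong ℓ V →
      ∑ i ∈ W, ℓ i ≤ ∑ i ∈ V, ℓ i := by
    intro V h1 h2
    exact hWmin' V (by rw [mem_filter]; exact ⟨mem_univ _, h1, h2⟩)
  -- Step 3: at most two elements outside W lie strictly below any element of W
  have hLo : ∀ j ∈ W, (Wᶜ.filter (fun i => ℓ i < ℓ j)).card ≤ 2 := by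
    intro j hjW
    by_contra hcon
    push_neg at hcon
    have hLone : (Wᶜ.filter (fun i => ℓ i < ℓ j)).Nonempty := card_pos.1 (by omega)
    obtain ⟨i0, hi0⟩ := hLone
    rw [mem_filter, Finset.mem_compl] at hi0
    have hswap : ∀ i : Fin (2 * m + 1), i ∉ W → ℓ i < ℓ j →
        2 * (∑ x ∈ W, ℓ x - ℓ j + ℓ i) < ∑ x, ℓ x := by
      intro i hiW hilt
      have hine : i ∉ W.erase j := fun hmem => hiW (Finset.mem_of_mem_erase hmem)
      have hVc : (insert i (W.erase j)).card = m := by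
        rw [Finset.card_insert_of_notMem hine, Finset.card_erase_of_mem hjW]
        omega
      have hVsum : ∑ x ∈ insert i (W.erase j), ℓ x = ∑ x ∈ W, ℓ x - ℓ j + ℓ i := by
        rw [Finset.sum_insert hine]
        have h5 := Finset.add_sum_erase W ℓ hjW
        linarith
      have hVshort : ¬ IsLong ℓ (insert i (W.erase j)) := by
        intro hVl
        have h6 := hWmin _ hVc hVl
        rw [hVsum] at h6
        linarith
      rw [short_iff hg, hVsum] at hVshort
      exact hVshort
    have hjc : j ∉ Wᶜ := by rw [Finset.mem_compl]; exact fun h => h hjW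
    have hFsum : ∑ x ∈ insert j Wᶜ, ℓ x = ∑ x, ℓ x - ∑ x ∈ W, ℓ x + ℓ j := by
      rw [Finset.sum_insert hjc, sum_compl]
      ring
    have hWlong2 : ∑ x, ℓ x < 2 * ∑ x ∈ W, ℓ x := (long_iff ℓ W).1 hWl
    have hFlong : IsLong ℓ (insert j Wᶜ) := by
      rw [long_iff, hFsum]
      have h7 := hswap i0 hi0.1 hi0.2
      have h0 := hpos i0
      linarith
    have hfilt : (insert j Wᶜ).filter (fun gg => ¬ IsLong ℓ ((insert j Wᶜ).erase gg)) =
        insert j (Wᶜ.filter (fun i => ¬ ℓ i < ℓ j)) := by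
      ext g
      rw [mem_filter]
      constructor
      · rintro ⟨hgF, hgs⟩
        rw [Finset.mem_insert] at hgF
        rcases hgF with rfl | hgc
        · exact Finset.mem_insert_self _ _
        · have hgj : g ≠ j := fun h => hjc (h ▸ hgc)
          have hsum2 : ∑ x ∈ (insert j Wᶜ).erase g, ℓ x =
              ∑ x, ℓ x - ∑ x ∈ W, ℓ x + ℓ j - ℓ g := by
            have h8 := Finset.add_sum_erase (insert j Wᶜ) ℓ
              (Finset.mem_insert_of_mem hgc)
            linarith [hFsum]
          rw [short_iff hg, hsum2] at hgs
          apply Finset.mem_insert_of_mem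
          rw [mem_filter]
          refine ⟨hgc, ?_⟩
          intro hlt
          have h9 := hswap g (Finset.mem_compl.1 hgc) hlt
          linarith
      · intro hmem2
        rw [Finset.mem_insert] at hmem2
        rcases hmem2 with rfl | hmem2
        · refine ⟨Finset.mem_insert_self _ _, ?_⟩
          have herase : (insert g Wᶜ).erase g = Wᶜ := Finset.erase_insert hjc
          rw [herase, short_iff hg, sum_compl]
          linarith
        · rw [mem_filter] at hmem2
          obtain ⟨hgc, hge⟩ := hmem2
          have hgj : g ≠ j := fun h => hjc (h ▸ hgc)
          refine ⟨Finset.mem_insert_of_mem hgc, ?_⟩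
          have hsum2 : ∑ x ∈ (insert j Wᶜ).erase g, ℓ x =
              ∑ x, ℓ x - ∑ x ∈ W, ℓ x + ℓ j - ℓ g := by
            have h8 := Finset.add_sum_erase (insert j Wᶜ) ℓ
              (Finset.mem_insert_of_mem hgc)
            linarith [hFsum]
          rw [short_iff hg, hsum2]
          push_neg at hge
          linarith
    have hjnotin : j ∉ Wᶜ.filter (fun i => ¬ ℓ i < ℓ j) :=
      fun h => hjc (Finset.mem_of_mem_filter j h)
    have hcards : (Wᶜ.filter (fun i => ℓ i < ℓ j)).card +
        (Wᶜ.filter (fun i => ¬ ℓ i < ℓ j)).card = m + 1 := by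
      rw [Finset.card_filter_add_card_filter_not]
      rw [Finset.card_compl, hWc, Fintype.card_fin]
      omega
    have hsigF : sigmaL ℓ (insert j Wᶜ) = 1 + (Wᶜ.filter (fun i => ¬ ℓ i < ℓ j)).card := by
      rw [sigmaL_def, hfilt, Finset.card_insert_of_notMem hjnotin]
      omega
    have hFpos : 0 < sigmaL ℓ (insert j Wᶜ) := by rw [hsigF]; omega
    have hmle : muL ℓ ≤ sigmaL ℓ (insert j Wᶜ) := by
      unfold muL
      exact Nat.sInf_le ⟨hFpos, insert j Wᶜ, hFlong, rfl⟩
    rw [hmu, hsigF] at hmle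
    omega
  -- Step 4: domination of W by the pattern {2,...,m+1}
  have hdom : ∀ t : Fin m, ℓ (W.orderEmbOfFin hWc t) ≤ ℓ ⟨(t : ℕ) + 2, by omega⟩ := by
    intro t
    by_contra hcon
    push_neg at hcon
    have hZcard : ((univ : Finset (Fin (2 * m + 1))).filter
        (fun i : Fin (2 * m + 1) => (i : ℕ) < (t : ℕ) + 3)).card = (t : ℕ) + 3 :=
      card_filter_lt _ (by omega)
    have hsplit := Finset.card_filter_add_card_filter_not
      (s := (univ : Finset (Fin (2 * m + 1))).filter
        (fun i : Fin (2 * m + 1) => (i : ℕ) < (t : ℕ) + 3)) (p := fun i => i ∈ W)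
    have hbound2 : (((univ : Finset (Fin (2 * m + 1))).filter
        (fun i : Fin (2 * m + 1) => (i : ℕ) < (t : ℕ) + 3)).filter
        (fun i => ¬ i ∈ W)).card ≤ 2 := by
      refine le_trans (Finset.card_le_card ?_)
        (hLo (W.orderEmbOfFin hWc t) (orderEmbOfFin_mem W hWc t))
      intro i hi
      rw [mem_filter] at hi
      obtain ⟨hiZ, hiW⟩ := hi
      rw [mem_filter] at hiZ
      rw [mem_filter]
      refine ⟨Finset.mem_compl.2 hiW, ?_⟩
      have hle : ℓ i ≤ ℓ ⟨(t : ℕ) + 2, by omega⟩ := by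
        apply hmono
        rw [Fin.le_def]
        show (i : ℕ) ≤ (t : ℕ) + 2
        omega
      exact lt_of_le_of_lt hle hcon
    have hbound1 : (((univ : Finset (Fin (2 * m + 1))).filter
        (fun i : Fin (2 * m + 1) => (i : ℕ) < (t : ℕ) + 3)).filter
        (fun i => i ∈ W)).card ≤ (t : ℕ) := by
      have hsub : ((univ : Finset (Fin (2 * m + 1))).filter
          (fun i : Fin (2 * m + 1) => (i : ℕ) < (t : ℕ) + 3)).filter (fun i => i ∈ W) ⊆
          ((univ : Finset (Fin m)).filter (fun s : Fin m => (s : ℕ) < (t : ℕ))).image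
            (W.orderEmbOfFin hWc) := by
        intro i hi
        rw [mem_filter] at hi
        obtain ⟨hiZ, hiW⟩ := hi
        rw [mem_filter] at hiZ
        have hrange : i ∈ Set.range (W.orderEmbOfFin hWc) := by
          rw [range_orderEmbOfFin]
          exact hiW
        obtain ⟨s, hs⟩ := hrange
        rw [Finset.mem_image]
        refine ⟨s, ?_, hs⟩
        rw [mem_filter]
        refine ⟨mem_univ _, ?_⟩
        by_contra hst
        push_neg at hst
        have h1 : W.orderEmbOfFin hWc t ≤ W.orderEmbOfFin hWc s :=
          (W.orderEmbOfFin hWc).monotone (by rw [Fin.le_def]; exact hst)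
        have h2 : ℓ (W.orderEmbOfFin hWc t) ≤ ℓ i := hs ▸ hmono h1
        have h3 : ℓ i ≤ ℓ ⟨(t : ℕ) + 2, by omega⟩ := by
          apply hmono
          rw [Fin.le_def]
          show (i : ℕ) ≤ (t : ℕ) + 2
          omega
        linarith
      calc _ ≤ _ := Finset.card_le_card hsub
        _ ≤ ((univ : Finset (Fin m)).filter (fun s : Fin m => (s : ℕ) < (t : ℕ))).card :=
            Finset.card_image_le
        _ = (t : ℕ) := card_filter_lt _ (le_of_lt t.isLt)
    omega
  -- Step 5: every set with at least m "ones" is long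
  have honeslong : ∀ J : Finset (Fin (2 * m + 1)), m ≤ ones J → IsLong ℓ J := by
    intro J hJ
    unfold ones at hJ
    obtain ⟨O, hOsub, hOcard⟩ := Finset.exists_subset_card_eq hJ
    have hg2 : ∀ tt : Fin m, (tt : ℕ) + 2 ≤ ((O.orderEmbOfFin hOcard tt : Fin (2 * m + 1)) : ℕ) := by
      have hsm := sm_le (fun s : Fin m => ((O.orderEmbOfFin hOcard s : Fin (2 * m + 1)) : ℕ))
        (fun a b hab => by
          have h5 := (O.orderEmbOfFin hOcard).strictMono hab
          exact h5) 2
        (fun h0 => by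
          have hmem3 := orderEmbOfFin_mem O hOcard ⟨0, h0⟩
          have h6 := hOsub hmem3
          rw [mem_filter] at h6
          exact h6.2)
      intro tt
      have h7 : 2 + (tt : ℕ) ≤ ((O.orderEmbOfFin hOcard tt : Fin (2 * m + 1)) : ℕ) := hsm tt
      omega
    have hWle : ∑ i ∈ W, ℓ i ≤ ∑ i ∈ J, ℓ i := by
      calc ∑ i ∈ W, ℓ i = ∑ tt : Fin m, ℓ (W.orderEmbOfFin hWc tt) := sum_emb W hWc ℓ
        _ ≤ ∑ tt : Fin m, ℓ (O.orderEmbOfFin hOcard tt) := by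
            apply Finset.sum_le_sum
            intro tt _
            refine le_trans (hdom tt) (hmono ?_)
            rw [Fin.le_def]
            show (tt : ℕ) + 2 ≤ ((O.orderEmbOfFin hOcard tt : Fin (2 * m + 1)) : ℕ)
            exact hg2 tt
        _ = ∑ i ∈ O, ℓ i := (sum_emb O hOcard ℓ).symm
        _ ≤ ∑ i ∈ J, ℓ i := Finset.sum_le_sum_of_subset_of_nonneg
            (hOsub.trans (Finset.filter_subset _ _)) (fun i _ _ => hpos i)
    rw [long_iff]
    have h10 := (long_iff ℓ W).1 hWl
    linarith
  -- Step 6: conclusion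
  intro J
  constructor
  · intro hJlong
    by_contra hcon
    push_neg at hcon
    have hc : m ≤ ones Jᶜ := by
      have h11 := ones_add_compl hm J
      omega
    have h2 := honeslong Jᶜ hc
    rw [long_iff] at hJlong h2
    rw [sum_compl] at h2
    linarith
  · exact honeslong J

end MuOdd

theorem mu_eq_m_iff_odd {r m : ℕ} (hr : r = 2 * m + 1) (hm : 1 ≤ m)
    (ℓ : Fin r → ℝ) (hg : IsGeneric ℓ) (hpos : ∀ j, 0 ≤ ℓ j)
    (hmono : Monotone ℓ) :
    muL ℓ = m ↔
      ∀ J : Finset (Fin r),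
        IsLong ℓ J ↔ IsLong (fun j => if (j : ℕ) < 2 then (0 : ℝ) else 1) J := by
  subst hr
  constructor
  · intro hmu J
    rw [MuOdd.eps_long_iff hm]
    exact MuOdd.forward hm ℓ hg hpos hmono hmu J
  · intro H
    apply MuOdd.backward hm ℓ
    intro J
    rw [← MuOdd.eps_long_iff hm]
    exact H J
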